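/- The assignment ξ_{ij} ↦ G_{ij} (identity matrix except (i,i) entry t_j, (i,j) entry 1-t_i) extends to a group homomorphism from the pure welded braid group (McCool group) PW_n — presented by generators ξ_{ij}, 1 ≤ i ≠ j ≤ n, subject to the McCool relations — into GL(n, ℂ[t_1^{±1},…,t_n^{±1}]). -/

import Mathlib

/-- The multivariate Laurent polynomial ring `ℂ[t₁^{±1}, …, t_n^{±1}]`,
realized as the group algebra of `ℤⁿ` over `ℂ`. -/
abbrev LaurentRing (n : ℕ) := AddMonoidAlgebra ℂ (Fin n →₀ ℤ)

/-- The variable `t_j`. -/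
noncomputable def tvar {n : ℕ} (j : Fin n) : LaurentRing n :=
  AddMonoidAlgebra.single (Finsupp.single j 1) 1

/-- The extended Gassner matrix `G_{ij}`: identity except that the `(i,i)` entry
is `t_j` and the `(i,j)` entry is `1 - t_i`. -/
noncomputable def gassnerG {n : ℕ} (i j : Fin n) :
    Matrix (Fin n) (Fin n) (LaurentRing n) :=
  Matrix.of fun k l =>
    if k = i ∧ l = i then tvar j
    else if k = i ∧ l = j then 1 - tvar i
    else if k = l then 1 else 0

/-- Generators `ξ_{ij}` (`i ≠ j`) of the McCool group `PW_n`. -/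
abbrev McCoolGen (n : ℕ) := { p : Fin n × Fin n // p.1 ≠ p.2 }

/-- `ξ_{ij}` as a free group element. -/
def ξ {n : ℕ} (i j : Fin n) (h : i ≠ j) : FreeGroup (McCoolGen n) :=
  FreeGroup.of ⟨(i, j), h⟩

/-- The McCool relations as relator words. -/
def McCoolRels (n : ℕ) : Set (FreeGroup (McCoolGen n)) :=
  { r | (∃ (k j s t : Fin n) (hkj : k ≠ j) (hst : s ≠ t),
          k ≠ s ∧ k ≠ t ∧ j ≠ s ∧ j ≠ t ∧
          r = (ξ k j hkj)⁻¹ * (ξ s t hst)⁻¹ * ξ k j hkj * ξ s t hst) ∨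
        (∃ (i j k : Fin n) (hij : i ≠ j) (hkj : k ≠ j), i ≠ k ∧
          r = (ξ i j hij)⁻¹ * (ξ k j hkj)⁻¹ * ξ i j hij * ξ k j hkj) ∨
        (∃ (i j k : Fin n) (hij : i ≠ j) (hkj : k ≠ j) (hik : i ≠ k),
          r = (ξ i j hij * ξ k j hkj)⁻¹ * (ξ i k hik)⁻¹ *
              (ξ i j hij * ξ k j hkj) * ξ i k hik) }

/-- The McCool group (pure welded braid group) `PW_n` as a presented group. -/
def McCoolGroup (n : ℕ) := PresentedGroup (McCoolRels n)

instance (n : ℕ) : Group (McCoolGroup n) := by unfold McCoolGroup; infer_instance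

open Matrix

noncomputable def tinv {n : ℕ} (j : Fin n) : LaurentRing n :=
  AddMonoidAlgebra.single (-Finsupp.single j 1) 1

lemma tvar_mul_tinv {n : ℕ} (j : Fin n) : tvar j * tinv j = 1 := by
  simp [tvar, tinv, AddMonoidAlgebra.single_mul_single, AddMonoidAlgebra.one_def]

lemma gassner_decomp {n : ℕ} (i j : Fin n) (h : i ≠ j) :
    gassnerG i j = 1 + Matrix.single i i (tvar j - 1) + Matrix.single i j (1 - tvar i) := by
  apply Matrix.ext; intro k l
  simp only [gassnerG, Matrix.of_apply, Matrix.add_apply, Matrix.one_apply, Matrix.single]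
  by_cases hk : k = i <;> by_cases hl : l = i <;> by_cases hlj : l = j <;>
    simp_all [@eq_comm (Fin n)]

lemma rowprod {n : ℕ} {R : Type*} [CommRing R] (i j : Fin n) (h : i ≠ j) (x y x' y' : R) :
    (1 + Matrix.single i i x + Matrix.single i j y) *
      (1 + Matrix.single i i x' + Matrix.single i j y')
    = 1 + Matrix.single i i (x + x' + x * x') + Matrix.single i j (y + y' + x * y') := by
  have h' : j ≠ i := h.symm
  simp [mul_add, add_mul, Matrix.single_mul_single_same, Matrix.single_mul_single_of_ne, h',
    Matrix.single_add]
  abel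

noncomputable def gassnerGinv {n : ℕ} (i j : Fin n) :
    Matrix (Fin n) (Fin n) (LaurentRing n) :=
  1 + Matrix.single i i (tinv j - 1) + Matrix.single i j (tinv j * (tvar i - 1))

lemma gassner_mul_inv {n : ℕ} (i j : Fin n) (h : i ≠ j) :
    gassnerG i j * gassnerGinv i j = 1 := by
  rw [gassner_decomp i j h, gassnerGinv, rowprod i j h]
  have hb := tvar_mul_tinv j
  have e1 : (tvar j - 1) + (tinv j - 1) + (tvar j - 1) * (tinv j - 1) = 0 := by
    linear_combination hb
  have e2 : (1 - tvar i) + tinv j * (tvar i - 1) +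
      (tvar j - 1) * (tinv j * (tvar i - 1)) = 0 := by
    linear_combination (tvar i - 1) * hb
  rw [e1, e2]; simp

lemma gassner_inv_mul {n : ℕ} (i j : Fin n) (h : i ≠ j) :
    gassnerGinv i j * gassnerG i j = 1 := by
  rw [gassner_decomp i j h, gassnerGinv, rowprod i j h]
  have hb := tvar_mul_tinv j
  have e1 : (tinv j - 1) + (tvar j - 1) + (tinv j - 1) * (tvar j - 1) = 0 := by
    linear_combination hb
  have e2 : tinv j * (tvar i - 1) + (1 - tvar i) +
      (tinv j - 1) * (1 - tvar i) = 0 := by ring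
  rw [e1, e2]; simp

lemma comm_disjoint {n : ℕ} (k j s t : Fin n) (hkj : k ≠ j) (hst : s ≠ t)
    (hks : k ≠ s) (hkt : k ≠ t) (hjs : j ≠ s) (hjt : j ≠ t) :
    gassnerG k j * gassnerG s t = gassnerG s t * gassnerG k j := by
  rw [gassner_decomp k j hkj, gassner_decomp s t hst]
  have h1 : s ≠ k := hks.symm
  have h2 : t ≠ k := hkt.symm
  simp [mul_add, add_mul, Matrix.single_mul_single_of_ne, hks, hjs, h1, h2]
  abel

lemma comm_samecol {n : ℕ} (i j k : Fin n) (hij : i ≠ j) (hkj : k ≠ j) (hik : i ≠ k) :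
    gassnerG i j * gassnerG k j = gassnerG k j * gassnerG i j := by
  rw [gassner_decomp i j hij, gassner_decomp k j hkj]
  have h1 : j ≠ k := hkj.symm
  have h2 : k ≠ i := hik.symm
  have h3 : j ≠ i := hij.symm
  simp [mul_add, add_mul, Matrix.single_mul_single_of_ne, hik, h1, h2, h3]
  abel

lemma prod_samecol {n : ℕ} (i j k : Fin n) (hij : i ≠ j) (hkj : k ≠ j) (hik : i ≠ k) :
    gassnerG i j * gassnerG k j =
      1 + Matrix.single i i (tvar j - 1) + Matrix.single i j (1 - tvar i)
        + Matrix.single k k (tvar j - 1) + Matrix.single k j (1 - tvar k) := by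
  rw [gassner_decomp i j hij, gassner_decomp k j hkj]
  have h1 : j ≠ k := hkj.symm
  simp [mul_add, add_mul, Matrix.single_mul_single_of_ne, hik, h1]

lemma comm_third {n : ℕ} (i j k : Fin n) (hij : i ≠ j) (hkj : k ≠ j) (hik : i ≠ k) :
    (gassnerG i j * gassnerG k j) * gassnerG i k =
      gassnerG i k * (gassnerG i j * gassnerG k j) := by
  rw [prod_samecol i j k hij hkj hik, gassner_decomp i k hik]
  have h1 : j ≠ i := hij.symm
  have h2 : j ≠ k := hkj.symm
  have h3 : k ≠ i := hik.symm
  simp [mul_add, add_mul, Matrix.single_mul_single_same, Matrix.single_mul_single_of_ne, hik, h1, h2, h3,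
    Matrix.single_add]
  apply Matrix.ext; intro r c
  simp only [Matrix.add_apply, Matrix.single, Matrix.of_apply, Matrix.one_apply]
  split_ifs <;> simp_all <;> ring

noncomputable def gUnit {n : ℕ} (p : McCoolGen n) :
    (Matrix (Fin n) (Fin n) (LaurentRing n))ˣ :=
  ⟨gassnerG p.val.1 p.val.2, gassnerGinv p.val.1 p.val.2,
    gassner_mul_inv _ _ p.2, gassner_inv_mul _ _ p.2⟩

lemma comm_to_one {G : Type*} [Group G] (A B : G) (h : A * B = B * A) :
    A⁻¹ * B⁻¹ * A * B = 1 := by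
  calc A⁻¹ * B⁻¹ * A * B = A⁻¹ * B⁻¹ * (A * B) := by rw [mul_assoc]
    _ = A⁻¹ * B⁻¹ * (B * A) := by rw [h]
    _ = 1 := by group

/-- `ξ_{ij} ↦ G_{ij}` extends to a homomorphism
`PW_n → GL(n, ℂ[t₁^{±1},…,t_n^{±1}])`. -/
theorem mccool_gassner_representation (n : ℕ) :
    ∃ φ : McCoolGroup n →* (Matrix (Fin n) (Fin n) (LaurentRing n))ˣ,
      ∀ p : McCoolGen n,
        ((φ (PresentedGroup.of p) : (Matrix (Fin n) (Fin n) (LaurentRing n))ˣ) :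
            Matrix (Fin n) (Fin n) (LaurentRing n)) = gassnerG p.val.1 p.val.2 := by
  have hrel : ∀ r ∈ McCoolRels n, FreeGroup.lift (gUnit (n := n)) r = 1 := by
    rintro r (⟨k, j, s, t, hkj, hst, hks, hkt, hjs, hjt, rfl⟩ |
      ⟨i, j, k, hij, hkj, hik, rfl⟩ | ⟨i, j, k, hij, hkj, hik, rfl⟩)
    · simp only [_root_.map_mul, map_inv, ξ, FreeGroup.lift_apply_of]
      exact comm_to_one _ _ (Units.ext (by
        simpa [gUnit] using comm_disjoint k j s t hkj hst hks hkt hjs hjt))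
    · simp only [_root_.map_mul, map_inv, ξ, FreeGroup.lift_apply_of]
      exact comm_to_one _ _ (Units.ext (by
        simpa [gUnit] using comm_samecol i j k hij hkj hik))
    · simp only [_root_.map_mul, map_inv, ξ, FreeGroup.lift_apply_of]
      exact comm_to_one _ _ (Units.ext (by
        simpa [gUnit] using comm_third i j k hij hkj hik))
  exact ⟨PresentedGroup.toGroup hrel, fun p => by
    exact congrArg Units.val (PresentedGroup.toGroup.of hrel (x := p))⟩
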